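/- For integers k ≥ 1 and 1 ≤ r ≤ k, Σ_{l=1}^{r} (-1)^{k-l} l! S(k,l) + Σ_{m=1}^{k-r} (-1)^{k-m-r} binom(k,m) · r! · S(k-m, r) = 1, where S is the Stirling number of the second kind. -/

import Mathlib

open Finset

/-- Stirling numbers of the second kind. -/
def S2 : ℕ → ℕ → ℕ
  | 0, 0 => 1
  | 0, _ + 1 => 0
  | _ + 1, 0 => 0
  | n + 1, k + 1 => S2 n k + (k + 1) * S2 n (k + 1)

/-- Unsigned Stirling numbers of the first kind. -/
def S1 : ℕ → ℕ → ℕ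
  | 0, 0 => 1
  | 0, _ + 1 => 0
  | _ + 1, 0 => 0
  | n + 1, k + 1 => S1 n k + n * S1 n (k + 1)

/-- Poly-Bernoulli number of negative index `B_n^{(-k)}` (closed power-sum formula). -/
def polyB (n k : ℕ) : ℤ :=
  ∑ l ∈ Finset.Icc 1 k, (-1 : ℤ) ^ (l + k) * (Nat.factorial l) * S2 k l * ((l : ℤ) + 1) ^ n

/-- Rising factorial `(r)_l = r (r+1) ⋯ (r+l-1)`. -/
def risingFact (r l : ℕ) : ℕ := ∏ i ∈ Finset.range l, (r + i)

lemma S2_eq_zero : ∀ {n l : ℕ}, n < l → S2 n l = 0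
  | 0, 0, h => by omega
  | 0, l + 1, _ => rfl
  | n + 1, 0, h => by omega
  | n + 1, l + 1, h => by
    rw [S2, S2_eq_zero (by omega), S2_eq_zero (by omega)]; ring

lemma g_rec (n L : ℕ) :
    ∑ i ∈ range (L + 1), (-1 : ℤ) ^ (L + i) * (L.choose i) * ((i : ℤ) + 1) ^ n =
      (∑ j ∈ range (L + 1), (-1 : ℤ) ^ (L + j) * (L.choose j) * (j : ℤ) ^ n) +
      (∑ j ∈ range (L + 2), (-1 : ℤ) ^ (L + 1 + j) * ((L+1).choose j) * (j : ℤ) ^ n) := by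
  have h2 : ∑ i ∈ range (L + 1), (-1 : ℤ) ^ (L + i) * (L.choose (i+1)) * ((i:ℤ)+1) ^ n
      = -∑ j ∈ range (L + 1), (-1 : ℤ) ^ (L + j) * (L.choose j) * (j : ℤ) ^ n
        + (-1 : ℤ)^L * (0:ℤ)^n := by
    rw [Finset.sum_range_succ' (fun j => (-1 : ℤ) ^ (L + j) * (L.choose j) * (j : ℤ) ^ n) L,
      Finset.sum_range_succ (fun i => (-1:ℤ) ^ (L + i) * (L.choose (i+1)) * ((i:ℤ)+1) ^ n) L]
    simp only [Nat.cast_add, Nat.cast_one, Nat.cast_zero, Nat.choose_zero_right,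
      Nat.choose_succ_self, Nat.cast_ofNat]
    have : ∀ i, (-1:ℤ) ^ (L + (i+1)) = -(-1:ℤ)^(L+i) := by
      intro i; rw [show L + (i+1) = (L+i)+1 by ring, pow_succ]; ring
    rw [Finset.sum_congr rfl (fun i _ => by rw [this i]; ring : ∀ i ∈ range L,
      (-1:ℤ) ^ (L + (i+1)) * (L.choose (i+1)) * ((i:ℤ)+1) ^ n
        = -((-1:ℤ)^(L+i) * (L.choose (i+1)) * ((i:ℤ)+1) ^ n)), Finset.sum_neg_distrib]
    ring
  rw [Finset.sum_range_succ' (fun j => (-1 : ℤ) ^ (L + 1 + j) * ((L+1).choose j) * (j : ℤ) ^ n) (L+1)]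
  simp only [Nat.cast_add, Nat.cast_one, Nat.cast_zero, Nat.choose_zero_right]
  have key : ∑ i ∈ range (L + 1), (-1 : ℤ) ^ (L + 1 + (i+1)) * ((L+1).choose (i+1)) * ((i:ℤ)+1) ^ n
      = ∑ i ∈ range (L + 1), ((-1 : ℤ) ^ (L + i) * (L.choose i) * ((i:ℤ)+1) ^ n
          + (-1 : ℤ) ^ (L + i) * (L.choose (i+1)) * ((i:ℤ)+1) ^ n) := by
    refine Finset.sum_congr rfl fun i _ => ?_
    have hc : ((L+1).choose (i+1) : ℤ) = (L.choose i : ℤ) + (L.choose (i+1) : ℤ) := by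
      rw [Nat.choose_succ_succ]; push_cast; ring
    have hs : (-1 : ℤ) ^ (L + 1 + (i+1)) = (-1 : ℤ) ^ (L + i) := by
      rw [show L + 1 + (i+1) = (L + i) + 2 by ring, pow_add]; norm_num
    rw [hc, hs]; ring
  rw [key, Finset.sum_add_distrib, h2]
  ring

lemma T_eq : ∀ (n l : ℕ), ((l.factorial : ℤ) * S2 n l) =
    ∑ j ∈ range (l+1), (-1:ℤ)^(l+j) * (l.choose j) * (j:ℤ)^n
  | 0, 0 => by simp [S2]
  | 0, l + 1 => by
    rw [show S2 0 (l+1) = 0 from rfl]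
    have := Int.alternating_sum_range_choose (n := l + 1)
    rw [if_neg (by omega)] at this
    have : ∑ j ∈ range (l+1+1), (-1:ℤ)^(l+1+j) * ((l+1).choose j) * (j:ℤ)^0
        = (-1:ℤ)^(l+1) * ∑ m ∈ range (l+1+1), (-1:ℤ)^m * (((l+1).choose m):ℤ) := by
      rw [Finset.mul_sum]
      refine Finset.sum_congr rfl fun j _ => ?_
      rw [pow_add]; ring
    rw [this]; simp [Int.alternating_sum_range_choose, Nat.succ_ne_zero]
  | n + 1, 0 => by simp [S2]
  | n + 1, L + 1 => by
    have ih1 := T_eq n L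
    have ih2 := T_eq n (L + 1)
    have hrec : ((L+1).factorial : ℤ) * S2 (n+1) (L+1)
        = (L+1) * ((L.factorial : ℤ) * S2 n L) + (L+1) * (((L+1).factorial : ℤ) * S2 n (L+1)) := by
      rw [show S2 (n+1) (L+1) = S2 n L + (L+1) * S2 n (L+1) from rfl, Nat.factorial_succ]
      push_cast; ring
    rw [hrec, ih1, ih2, ← mul_add, ← g_rec n L]
    -- now RHS goal: (L+1) * Σ_i (-1)^(L+i) C(L,i) (i+1)^n = Σ_j (-1)^(L+1+j) C(L+1,j) j^(n+1)
    rw [Finset.sum_range_succ' (fun j => (-1:ℤ)^(L+1+j) * ((L+1).choose j) * (j:ℤ)^(n+1)) (L+1)]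
    simp only [Nat.cast_add, Nat.cast_one, Nat.cast_zero, Nat.choose_zero_right,
      zero_pow (by omega : n + 1 ≠ 0), mul_zero, add_zero, Nat.cast_one]
    rw [Finset.mul_sum]
    refine Finset.sum_congr rfl fun i _ => ?_
    have hc : ((L+1) : ℤ) * (L.choose i) = ((L+1).choose (i+1)) * (i+1) := by
      exact_mod_cast Nat.add_one_mul_choose_eq L i
    have hs : (-1 : ℤ) ^ (L + 1 + (i+1)) = (-1 : ℤ) ^ (L + i) := by
      rw [show L + 1 + (i+1) = (L + i) + 2 by ring, pow_add]; norm_num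
    rw [hs]
    calc (L+1 : ℤ) * ((-1:ℤ)^(L+i) * (L.choose i) * ((i:ℤ)+1)^n)
        = (-1:ℤ)^(L+i) * (((L+1:ℤ)) * (L.choose i)) * ((i:ℤ)+1)^n := by ring
      _ = (-1:ℤ)^(L+i) * (((L+1).choose (i+1) : ℤ) * (i+1)) * ((i:ℤ)+1)^n := by rw [hc]
      _ = (-1:ℤ)^(L+i) * ((L+1).choose (i+1)) * ((i:ℤ)+1)^(n+1) := by rw [pow_succ]; push_cast; ring

lemma neg_one_pow_congr' {a b : ℕ} (h : a % 2 = b % 2) : (-1:ℤ)^a = (-1:ℤ)^b := by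
  rcases Nat.even_or_odd a with ha | ha
  · have hb : Even b := Nat.even_iff.2 (by rw [← h]; exact Nat.even_iff.1 ha)
    rw [ha.neg_one_pow, hb.neg_one_pow]
  · have hb : Odd b := Nat.odd_iff.2 (by rw [← h]; exact Nat.odd_iff.1 ha)
    rw [ha.neg_one_pow, hb.neg_one_pow]

lemma sub_one_pow (x : ℤ) (k : ℕ) :
    (x - 1)^k = ∑ m ∈ range (k+1), (-1:ℤ)^m * (k.choose m) * x^(k-m) := by
  have h := add_pow x (-1 : ℤ) k
  rw [show x + (-1:ℤ) = x - 1 by ring] at h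
  rw [h, ← Finset.sum_range_reflect]
  refine Finset.sum_congr rfl fun m hm => ?_
  rw [Finset.mem_range] at hm
  rw [show k + 1 - 1 - m = k - m from by omega, Nat.choose_symm (by omega),
    show k - (k - m) = m from by omega]
  ring

lemma binom_inner (x : ℤ) (k : ℕ) :
    ∑ m ∈ Icc 1 k, (-1:ℤ)^m * (k.choose m) * x^(k-m) = (x-1)^k - x^k := by
  rw [sub_one_pow, show range (k+1) = insert 0 (Icc 1 k) by
    ext a; simp [Finset.mem_Icc, Finset.mem_range]; omega,
    Finset.sum_insert (by simp)]
  simp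

lemma hstep1 (k r : ℕ) (hk : 1 ≤ k) (hr1 : 1 ≤ r) (hrk : r ≤ k) :
    (∑ l ∈ Finset.Icc 1 r, (-1 : ℤ) ^ (k - l) * (Nat.factorial l) * S2 k l)
      = ∑ j ∈ Finset.Icc 1 r, (-1:ℤ)^(k+j) * (((r+1).choose (j+1) : ℕ) : ℤ) * (j:ℤ)^k := by
  have e1 : ∀ l ∈ Finset.Icc 1 r, (-1 : ℤ) ^ (k - l) * (Nat.factorial l) * S2 k l
      = ∑ j ∈ Finset.Icc 1 l, (-1:ℤ)^(k+j) * (l.choose j) * (j:ℤ)^k := by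
    intro l hl
    rw [Finset.mem_Icc] at hl
    rw [neg_one_pow_congr' (show (k-l)%2 = (k+l)%2 by omega), mul_assoc, T_eq k l, Finset.mul_sum,
      Finset.sum_range_succ' (fun j => (-1:ℤ)^(k+l) * ((-1:ℤ)^(l+j) * (l.choose j) * (j:ℤ)^k)) l,
      show Icc 1 l = Ico 1 (l+1) from (Finset.Ico_add_one_right_eq_Icc ..).symm,
      Finset.sum_Ico_eq_sum_range]
    simp only [Nat.cast_zero, Nat.cast_add, Nat.cast_one, Nat.choose_zero_right,
      Nat.add_sub_cancel, zero_pow (show k ≠ 0 by omega), mul_zero, mul_one, add_zero]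
    refine Finset.sum_congr rfl fun i _ => ?_
    have hsg : (-1:ℤ)^(k+l) * (-1:ℤ)^(l+(i+1)) = (-1:ℤ)^(k+(1+i)) := by
      rw [← pow_add]; exact neg_one_pow_congr' (by omega)
    rw [show 1+i = i+1 from by omega]
    push_cast
    linear_combination ((l.choose (i+1) : ℤ) * ((i:ℤ)+1)^k) * hsg
  rw [Finset.sum_congr rfl e1,
    Finset.sum_comm' (s := Icc 1 r) (t := fun l => Icc 1 l) (t' := Icc 1 r)
      (s' := fun j => Icc j r) (fun l j => by simp only [Finset.mem_Icc]; omega)]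
  refine Finset.sum_congr rfl fun j hj => ?_
  rw [← Nat.sum_Icc_choose, Nat.cast_sum, Finset.mul_sum, Finset.sum_mul]

lemma hstep2 (k r : ℕ) (hk : 1 ≤ k) (hr1 : 1 ≤ r) (hrk : r ≤ k) :
    (∑ m ∈ Finset.Icc 1 (k - r),
        (-1 : ℤ) ^ (k - m - r) * (Nat.choose k m) * (Nat.factorial r) * S2 (k - m) r)
      = 1 - ∑ j ∈ Finset.Icc 1 r, (-1:ℤ)^(k+j) * (((r+1).choose (j+1) : ℕ) : ℤ) * (j:ℤ)^k := by
  -- extend the sum from Icc 1 (k-r) to Icc 1 k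
  rw [Finset.sum_subset (Finset.Icc_subset_Icc_right (by omega : k - r ≤ k))
    (fun m hm hnm => by
      simp only [Finset.mem_Icc] at hm hnm
      rw [S2_eq_zero (show k - m < r by omega)]
      simp)]
  -- rewrite each term via T_eq and the sign lemma
  have e1 : ∀ m ∈ Finset.Icc 1 k,
      (-1 : ℤ) ^ (k - m - r) * (k.choose m) * (r.factorial) * S2 (k - m) r
      = ∑ j ∈ range (r+1), (-1:ℤ)^(k+m+r) * (k.choose m)
          * ((-1:ℤ)^(r+j) * (r.choose j) * (j:ℤ)^(k-m)) := by
    intro m hm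
    rw [Finset.mem_Icc] at hm
    rcases le_or_gt (m + r) k with hmr | hmr
    · rw [neg_one_pow_congr' (show (k-m-r)%2 = (k+m+r)%2 by omega), mul_assoc, mul_assoc,
        T_eq (k-m) r, Finset.mul_sum, Finset.mul_sum]
      exact Finset.sum_congr rfl fun j _ => by ring
    · rw [S2_eq_zero (show k - m < r by omega), ← Finset.mul_sum, ← T_eq (k-m) r,
        S2_eq_zero (show k - m < r by omega)]
      simp
  rw [Finset.sum_congr rfl e1, Finset.sum_comm]
  -- evaluate the inner sum for each j
  have e2 : ∀ j ∈ range (r+1),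
      (∑ m ∈ Finset.Icc 1 k, (-1:ℤ)^(k+m+r) * (k.choose m)
          * ((-1:ℤ)^(r+j) * (r.choose j) * (j:ℤ)^(k-m)))
      = (-1:ℤ)^(k+j) * (r.choose j) * (((j:ℤ)-1)^k - (j:ℤ)^k) := by
    intro j _
    have e3 : ∀ m ∈ Finset.Icc 1 k,
        (-1:ℤ)^(k+m+r) * (k.choose m) * ((-1:ℤ)^(r+j) * (r.choose j) * (j:ℤ)^(k-m))
        = (-1:ℤ)^(k+j) * (r.choose j) * ((-1:ℤ)^m * (k.choose m) * (j:ℤ)^(k-m)) := by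
      intro m _
      have hsg : (-1:ℤ)^(k+m+r) * (-1:ℤ)^(r+j) = (-1:ℤ)^(k+j) * (-1:ℤ)^m := by
        rw [← pow_add, ← pow_add]; exact neg_one_pow_congr' (by omega)
      linear_combination ((k.choose m : ℤ) * (r.choose j : ℤ) * (j:ℤ)^(k-m)) * hsg
    rw [Finset.sum_congr rfl e3, ← Finset.mul_sum, binom_inner]
  rw [Finset.sum_congr rfl e2,
    Finset.sum_range_succ' (fun j => (-1:ℤ)^(k+j) * (r.choose j) * (((j:ℤ)-1)^k - (j:ℤ)^k)) r]
  -- the j = 0 term equals 1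
  have h0 : (-1:ℤ)^(k+0) * ((r.choose 0 : ℕ) : ℤ) * ((((0:ℕ):ℤ)-1)^k - ((0:ℕ):ℤ)^k) = 1 := by
    simp [zero_pow (show k ≠ 0 by omega), show ((0:ℤ)-1) = -1 by ring, ← mul_pow]
  rw [h0]
  -- telescoping for the rest
  have e4 : ∀ i ∈ range r,
      (-1:ℤ)^(k+(i+1)) * (r.choose (i+1)) * ((((i+1:ℕ):ℤ)-1)^k - ((i+1:ℕ):ℤ)^k)
        + (-1:ℤ)^(k+(1+i)) * (((r+1).choose ((1+i)+1) : ℕ) : ℤ) * ((1+i:ℕ):ℤ)^k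
      = ((-1:ℤ)^(k+(i+1)) * (r.choose ((i+1)+1)) * ((i+1:ℕ):ℤ)^k)
        - ((-1:ℤ)^(k+i) * (r.choose (i+1)) * ((i:ℕ):ℤ)^k) := by
    intro i _
    have hp : (((r+1).choose ((1+i)+1) : ℕ) : ℤ) = (r.choose (i+1)) + (r.choose (i+2)) := by
      rw [show (1+i)+1 = i+2 from by omega, Nat.choose_succ_succ r (i+1)]
      push_cast; ring
    have h1 : (-1:ℤ)^(k+(i+1)) = -(-1:ℤ)^(k+i) := by
      rw [show k+(i+1) = (k+i)+1 from by ring, pow_succ]; ring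
    have h2 : (-1:ℤ)^(k+(1+i)) = -(-1:ℤ)^(k+i) := by
      rw [show k+(1+i) = (k+i)+1 from by ring, pow_succ]; ring
    rw [hp, h1, h2, show i+2 = (i+1)+1 from rfl]
    push_cast
    ring
  rw [show (∑ j ∈ Icc 1 r, (-1:ℤ)^(k+j) * (((r+1).choose (j+1) : ℕ) : ℤ) * (j:ℤ)^k)
      = ∑ i ∈ range r, (-1:ℤ)^(k+(1+i)) * (((r+1).choose ((1+i)+1) : ℕ) : ℤ) * ((1+i:ℕ):ℤ)^k
    from by rw [show Icc 1 r = Ico 1 (r+1) from (Finset.Ico_add_one_right_eq_Icc ..).symm,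
      Finset.sum_Ico_eq_sum_range]; simp]
  have tele := Finset.sum_range_sub (fun i => (-1:ℤ)^(k+i) * (r.choose (i+1)) * ((i:ℕ):ℤ)^k) r
  have hfin : ∑ i ∈ range r, ((-1:ℤ)^(k+(i+1)) * (r.choose ((i+1)+1)) * ((i+1:ℕ):ℤ)^k
        - (-1:ℤ)^(k+i) * (r.choose (i+1)) * ((i:ℕ):ℤ)^k) = 0 := by
    rw [tele, Nat.choose_succ_self]
    simp [zero_pow (show k ≠ 0 by omega)]
  have this1 := Finset.sum_congr rfl e4
  rw [Finset.sum_add_distrib] at this1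
  rw [hfin] at this1
  linarith [this1]

theorem stmt_16 (k r : ℕ) (hk : 1 ≤ k) (hr1 : 1 ≤ r) (hrk : r ≤ k) :
    (∑ l ∈ Finset.Icc 1 r, (-1 : ℤ) ^ (k - l) * (Nat.factorial l) * S2 k l) +
        (∑ m ∈ Finset.Icc 1 (k - r),
          (-1 : ℤ) ^ (k - m - r) * (Nat.choose k m) * (Nat.factorial r) * S2 (k - m) r) = 1 := by
  rw [hstep1 k r hk hr1 hrk, hstep2 k r hk hr1 hrk]
  ring
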